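/- Let r and r₀ be real numbers with r ≥ 1/2 and r₀ ≥ 1. Define G̃² : ℕ³ → [0, ∞) by G̃²(k, k₁, k₂) = χ[|k−k₁| ≤ 10]·2^{(1/2−r)k₂}·2^{(1−r₀)k₁} + χ[|k−k₂| ≤ 10]·2^{(r−r₀)k₁}·2^{(1−2r)k} + χ[|k₁−k₂| ≤ 10]·2^{(1/2−r)k}·2^{(1−r₀)k₁}, where χ[·] denotes the indicator of the stated condition. Then G̃² satisfies property (G). -/

import Mathlib

noncomputable section

open scoped ENNReal

/-- The condition that the two largest entries of the triple `(k, k₁, k₂)` differ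
by at most 10 (i.e. `max ≤ med + 10`). -/
def nearMax (k k₁ k₂ : ℕ) : Prop :=
  max k (max k₁ k₂) ≤ (k + k₁ + k₂ - max k (max k₁ k₂) - min k (min k₁ k₂)) + 10

instance : ∀ k k₁ k₂, Decidable (nearMax k k₁ k₂) := fun _ _ _ => Nat.decLe _ _

/-- Property (G): the trilinear summation bound for a weight `G : ℕ³ → [0,∞)`,
restricted to triples whose two largest entries differ by at most 10.
The sum is taken in `ℝ≥0∞` so that it is always well defined. -/
def propertyG (G : ℕ → ℕ → ℕ → ℝ) : Prop :=
  ∃ C : ℝ, ∀ a b c : ℕ → ℝ,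
    (∀ n, 0 ≤ a n) → (∀ n, 0 ≤ b n) → (∀ n, 0 ≤ c n) →
    Summable (fun n => (a n) ^ 2) → Summable (fun n => (b n) ^ 2) →
    Summable (fun n => (c n) ^ 2) →
    (∑' p : ℕ × ℕ × ℕ,
        if nearMax p.1 p.2.1 p.2.2 then
          ENNReal.ofReal (G p.1 p.2.1 p.2.2 * a p.1 * b p.2.1 * c p.2.2 /
            ((min p.1 (min p.2.1 p.2.2) : ℝ) + 1) ^ 10)
        else 0) ≤
      ENNReal.ofReal (C * Real.sqrt (∑' n, (a n) ^ 2) * Real.sqrt (∑' n, (b n) ^ 2) *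
        Real.sqrt (∑' n, (c n) ^ 2))

/-- The weight `G̃²` from Proposition 4.4 (estimates for dyadic pieces, part 2). -/
def Gwt2 (r r₀ : ℝ) (k k₁ k₂ : ℕ) : ℝ :=
  (if |(k : ℤ) - (k₁ : ℤ)| ≤ 10 then
      (2 : ℝ) ^ ((1 / 2 - r) * (k₂ : ℝ)) * (2 : ℝ) ^ ((1 - r₀) * (k₁ : ℝ)) else 0) +
  (if |(k : ℤ) - (k₂ : ℤ)| ≤ 10 then
      (2 : ℝ) ^ ((r - r₀) * (k₁ : ℝ)) * (2 : ℝ) ^ ((1 - 2 * r) * (k : ℝ)) else 0) +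
  (if |(k₁ : ℤ) - (k₂ : ℤ)| ≤ 10 then
      (2 : ℝ) ^ ((1 / 2 - r) * (k : ℝ)) * (2 : ℝ) ^ ((1 - r₀) * (k₁ : ℝ)) else 0)

/-! ### Auxiliary material -/

open MeasureTheory

/-- The tail constant `∑ 1/(n+1)^10`. -/
def T10 : ℝ := ∑' n : ℕ, 1 / ((n : ℝ) + 1) ^ 10

lemma summable_T10 : Summable (fun n : ℕ => 1 / ((n : ℝ) + 1) ^ 10) := by
  have h : Summable (fun n : ℕ => 1 / ((n : ℝ)) ^ 10) :=
    Real.summable_one_div_nat_pow.mpr (by norm_num)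
  have := (summable_nat_add_iff 1).mpr h
  refine this.congr fun n => ?_
  push_cast; ring_nf

lemma T10_nonneg : 0 ≤ T10 := tsum_nonneg fun n => by positivity

lemma ofReal_T10 : ENNReal.ofReal T10 = ∑' n : ℕ, ENNReal.ofReal (1 / ((n : ℝ) + 1) ^ 10) :=
  ENNReal.ofReal_tsum_of_nonneg (fun n => by positivity) summable_T10

/-- The `ℓ²` "norm" of an `ℝ≥0∞`-valued sequence. -/
def en (φ : ℕ → ℝ≥0∞) : ℝ≥0∞ := (∑' k, φ k ^ (2:ℝ)) ^ (1/2:ℝ)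

lemma myCS (f g : ℕ → ℝ≥0∞) :
    ∑' k, f k * g k ≤ en f * en g := by
  have h := ENNReal.lintegral_mul_le_Lp_mul_Lq (Measure.count : Measure ℕ)
    Real.HolderConjugate.two_two
    (measurable_of_countable f).aemeasurable (measurable_of_countable g).aemeasurable
  simpa [lintegral_count, en] using h

lemma le_en (φ : ℕ → ℝ≥0∞) (n : ℕ) : φ n ≤ en φ := by
  have h1 : φ n ^ (2:ℝ) ≤ ∑' k, φ k ^ (2:ℝ) := ENNReal.le_tsum n
  have h2 := ENNReal.rpow_le_rpow h1 (by norm_num : (0:ℝ) ≤ 1/2)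
  rwa [← ENNReal.rpow_mul, show (2:ℝ) * (1/2) = 1 by norm_num, ENNReal.rpow_one] at h2

lemma en_comp_le (φ : ℕ → ℝ≥0∞) (s : ℕ) : en (fun k => φ (k + s)) ≤ en φ :=
  ENNReal.rpow_le_rpow
    (ENNReal.tsum_comp_le_tsum_of_injective (add_left_injective s) (fun k => φ k ^ (2:ℝ)))
    (by norm_num)

lemma shiftCS (φ ψ : ℕ → ℝ≥0∞) (s : ℕ) : ∑' k, φ k * ψ (k + s) ≤ en φ * en ψ :=
  le_trans (myCS φ (fun k => ψ (k + s))) (mul_le_mul_right (en_comp_le ψ s) _)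

lemma shiftCS' (φ ψ : ℕ → ℝ≥0∞) (s : ℕ) : ∑' k, φ (k + s) * ψ k ≤ en φ * en ψ := by
  refine le_trans ?_ (mul_le_mul_left (en_comp_le φ s) _)
  exact le_of_eq_of_le rfl (myCS (fun k => φ (k + s)) ψ)

lemma shiftSum (φ ψ : ℕ → ℝ≥0∞) (s : ℕ) :
    ∑' (q : ℕ × ℕ), (if q.2 = q.1 + s then φ q.1 * ψ q.2 else 0) = ∑' k, φ k * ψ (k + s) := by
  rw [ENNReal.tsum_prod (f := fun k m => if m = k + s then φ k * ψ m else 0)]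
  refine tsum_congr fun k => ?_
  rw [tsum_eq_single (k + s) (fun m hm => if_neg hm)]
  simp

lemma en_ofReal (a : ℕ → ℝ) (ha : ∀ n, 0 ≤ a n) (hs : Summable fun n => a n ^ 2) :
    en (fun n => ENNReal.ofReal (a n)) = ENNReal.ofReal (Real.sqrt (∑' n, a n ^ 2)) := by
  unfold en
  have h1 : ∀ k : ℕ, ENNReal.ofReal (a k) ^ (2:ℝ) = ENNReal.ofReal (a k ^ 2) := by
    intro k
    rw [ENNReal.ofReal_rpow_of_nonneg (ha k) (by norm_num : (0:ℝ) ≤ 2), Real.rpow_two]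
  rw [tsum_congr h1, ← ENNReal.ofReal_tsum_of_nonneg (fun n => sq_nonneg _) hs]
  rw [ENNReal.ofReal_rpow_of_nonneg (tsum_nonneg fun n => sq_nonneg _)
    (by norm_num : (0:ℝ) ≤ 1/2), ← Real.sqrt_eq_rpow]

/-- The two-dimensional band estimate. -/
lemma D2 (α β : ℕ → ℝ≥0∞) :
    ∑' (q : ℕ × ℕ), (if q.1 ≤ q.2 + 10 ∧ q.2 ≤ q.1 + 10 then α q.1 * β q.2 else 0) ≤
      22 * (en α * en β) := by
  have hpt : ∀ q : ℕ × ℕ,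
      (if q.1 ≤ q.2 + 10 ∧ q.2 ≤ q.1 + 10 then α q.1 * β q.2 else 0) ≤
      (∑ s ∈ Finset.range 11, if q.2 = q.1 + s then α q.1 * β q.2 else 0) +
      (∑ s ∈ Finset.range 11, if q.1 = q.2 + s then α q.1 * β q.2 else 0) := by
    intro q
    by_cases h : q.1 ≤ q.2 + 10 ∧ q.2 ≤ q.1 + 10
    · rw [if_pos h]
      rcases le_or_gt q.1 q.2 with hle | hlt
      · refine le_trans ?_ le_self_add
        have hmem : q.2 - q.1 ∈ Finset.range 11 := by simp [Finset.mem_range]; omega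
        refine le_trans (le_of_eq ?_) (Finset.single_le_sum (fun i _ => zero_le) hmem)
        rw [if_pos (by omega)]
      · refine le_trans ?_ le_add_self
        have hmem : q.1 - q.2 ∈ Finset.range 11 := by simp [Finset.mem_range]; omega
        refine le_trans (le_of_eq ?_) (Finset.single_le_sum (fun i _ => zero_le) hmem)
        rw [if_pos (by omega)]
    · simp [if_neg h]
  refine le_trans (ENNReal.tsum_le_tsum hpt) ?_
  rw [ENNReal.tsum_add]
  rw [Summable.tsum_finsetSum (fun i _ => ENNReal.summable), Summable.tsum_finsetSum (fun i _ => ENNReal.summable)]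
  have h1 : ∀ s ∈ Finset.range 11,
      (∑' (q : ℕ × ℕ), if q.2 = q.1 + s then α q.1 * β q.2 else 0) ≤ en α * en β := by
    intro s _
    rw [shiftSum]
    exact shiftCS α β s
  have h2 : ∀ s ∈ Finset.range 11,
      (∑' (q : ℕ × ℕ), if q.1 = q.2 + s then α q.1 * β q.2 else 0) ≤ en α * en β := by
    intro s _
    calc (∑' (q : ℕ × ℕ), if q.1 = q.2 + s then α q.1 * β q.2 else 0)
        = ∑' (q : ℕ × ℕ), if q.1 = q.2 + s then β q.2 * α q.1 else 0 := by
          refine tsum_congr fun q => ?_; rw [mul_comm]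
      _ = ∑' (q : ℕ × ℕ), if (Equiv.prodComm ℕ ℕ q).1 = (Equiv.prodComm ℕ ℕ q).2 + s then
            β (Equiv.prodComm ℕ ℕ q).2 * α (Equiv.prodComm ℕ ℕ q).1 else 0 :=
          ((Equiv.prodComm ℕ ℕ).tsum_eq _).symm
      _ = ∑' (q : ℕ × ℕ), if q.2 = q.1 + s then β q.1 * α q.2 else 0 := rfl
      _ = ∑' k, β k * α (k + s) := shiftSum β α s
      _ = ∑' k, α (k + s) * β k := by exact tsum_congr fun k => mul_comm _ _
      _ ≤ en α * en β := shiftCS' α β s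
  calc (∑ s ∈ Finset.range 11, ∑' (q : ℕ × ℕ), if q.2 = q.1 + s then α q.1 * β q.2 else 0)
        + (∑ s ∈ Finset.range 11, ∑' (q : ℕ × ℕ), if q.1 = q.2 + s then α q.1 * β q.2 else 0)
      ≤ (∑ _s ∈ Finset.range 11, en α * en β) + (∑ _s ∈ Finset.range 11, en α * en β) :=
        add_le_add (Finset.sum_le_sum h1) (Finset.sum_le_sum h2)
    _ = 22 * (en α * en β) := by
        simp [Finset.sum_const]
        ring

/-- The main `ℝ≥0∞`-valued trilinear estimate for a near-diagonal pair `(k, k₁)`. -/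
lemma L0 (α β γ : ℕ → ℝ≥0∞) :
    ∑' p : ℕ × ℕ × ℕ,
      (if nearMax p.1 p.2.1 p.2.2 ∧ p.1 ≤ p.2.1 + 10 ∧ p.2.1 ≤ p.1 + 10 then
        α p.1 * β p.2.1 * γ p.2.2 *
          ENNReal.ofReal (1 / ((min p.1 (min p.2.1 p.2.2) : ℝ) + 1) ^ 10)
      else 0) ≤
    22 * (41 + ENNReal.ofReal T10) * (en α * en β * en γ) := by
  set u : ℕ → ℕ → ℝ≥0∞ := fun k k₁ => if k ≤ k₁ + 10 ∧ k₁ ≤ k + 10 then α k * β k₁ else 0 with hu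
  set v : ℕ → ℕ → ℝ≥0∞ := fun k k₂ => if k ≤ k₂ + 20 ∧ k₂ ≤ k + 20 then γ k₂ else 0 with hv
  set w : ℕ → ℝ≥0∞ := fun k₂ => γ k₂ * ENNReal.ofReal (1 / ((k₂ : ℝ) + 1) ^ 10) with hw
  have hpt : ∀ p : ℕ × ℕ × ℕ,
      (if nearMax p.1 p.2.1 p.2.2 ∧ p.1 ≤ p.2.1 + 10 ∧ p.2.1 ≤ p.1 + 10 then
        α p.1 * β p.2.1 * γ p.2.2 *
          ENNReal.ofReal (1 / ((min p.1 (min p.2.1 p.2.2) : ℝ) + 1) ^ 10)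
      else 0) ≤ u p.1 p.2.1 * v p.1 p.2.2 + u p.1 p.2.1 * w p.2.2 := by
    rintro ⟨k, k₁, k₂⟩
    dsimp only
    by_cases h : nearMax k k₁ k₂ ∧ k ≤ k₁ + 10 ∧ k₁ ≤ k + 10
    · rw [if_pos h]
      obtain ⟨hnm, h1, h2⟩ := h
      rw [hu]; dsimp only
      rw [if_pos ⟨h1, h2⟩]
      by_cases hk : k ≤ k₂ + 20
      · have hk2 : k₂ ≤ k + 20 := by unfold nearMax at hnm; omega
        refine le_trans ?_ le_self_add
        rw [hv]; dsimp only; rw [if_pos ⟨hk, hk2⟩]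
        have hof : ENNReal.ofReal (1 / ((min (k:ℝ) (min (k₁:ℝ) (k₂:ℝ))) + 1) ^ 10) ≤ 1 := by
          refine ENNReal.ofReal_le_one.mpr ?_
          rw [div_le_one (by positivity)]
          refine one_le_pow₀ ?_
          have h0 : (0:ℝ) ≤ min (k:ℝ) (min (k₁:ℝ) (k₂:ℝ)) :=
            le_min (Nat.cast_nonneg _) (le_min (Nat.cast_nonneg _) (Nat.cast_nonneg _))
          linarith
        calc α k * β k₁ * γ k₂ * ENNReal.ofReal (1 / ((min (k:ℝ) (min (k₁:ℝ) (k₂:ℝ))) + 1) ^ 10)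
            ≤ α k * β k₁ * γ k₂ * 1 := mul_le_mul_right hof _
          _ = α k * β k₁ * γ k₂ := mul_one _
      · refine le_trans ?_ le_add_self
        have hmin : min (k:ℝ) (min (k₁:ℝ) (k₂:ℝ)) = (k₂:ℝ) := by
          rw [min_eq_right (Nat.cast_le.mpr (by omega : k₂ ≤ k₁)),
            min_eq_right (Nat.cast_le.mpr (by omega : k₂ ≤ k))]
        rw [hmin, hw]; dsimp only
        rw [mul_assoc, mul_assoc]
    · rw [if_neg h]; exact zero_le
  refine le_trans (ENNReal.tsum_le_tsum hpt) ?_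
  rw [ENNReal.tsum_add]
  have hvbound : ∀ k, (∑' k₂, v k k₂) ≤ 41 * en γ := by
    intro k
    rw [tsum_eq_sum (s := Finset.Icc (k - 20) (k + 20))
      (fun b hb => by
        rw [hv]; dsimp only
        rw [if_neg (by simp [Finset.mem_Icc] at hb; omega)])]
    calc (∑ b ∈ Finset.Icc (k - 20) (k + 20), v k b)
        ≤ ∑ _b ∈ Finset.Icc (k - 20) (k + 20), en γ := by
          refine Finset.sum_le_sum fun b _ => ?_
          rw [hv]; dsimp only
          split
          · exact le_en γ b
          · exact zero_le
      _ = ((Finset.Icc (k - 20) (k + 20)).card : ℝ≥0∞) * en γ := by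
          rw [Finset.sum_const, nsmul_eq_mul]
      _ ≤ 41 * en γ := by
          refine mul_le_mul_left ?_ _
          have hcard : (Finset.Icc (k - 20) (k + 20)).card ≤ 41 := by
            rw [Nat.card_Icc]; omega
          calc ((Finset.Icc (k - 20) (k + 20)).card : ℝ≥0∞) ≤ ((41 : ℕ) : ℝ≥0∞) :=
              Nat.cast_le.mpr hcard
            _ = 41 := by norm_num
  have hwbound : (∑' k₂, w k₂) ≤ en γ * ENNReal.ofReal T10 := by
    calc (∑' k₂, w k₂) ≤ ∑' k₂ : ℕ, en γ * ENNReal.ofReal (1 / ((k₂ : ℝ) + 1) ^ 10) :=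
        ENNReal.tsum_le_tsum fun k₂ => mul_le_mul_left (le_en γ k₂) _
      _ = en γ * ∑' k₂ : ℕ, ENNReal.ofReal (1 / ((k₂ : ℝ) + 1) ^ 10) := ENNReal.tsum_mul_left
      _ = en γ * ENNReal.ofReal T10 := by rw [ofReal_T10]
  have hu2 : (∑' q : ℕ × ℕ, u q.1 q.2) ≤ 22 * (en α * en β) := D2 α β
  have hP : (∑' p : ℕ × ℕ × ℕ, u p.1 p.2.1 * v p.1 p.2.2) ≤
      22 * (en α * en β) * (41 * en γ) := by
    rw [ENNReal.tsum_prod (f := fun (k : ℕ) (q : ℕ × ℕ) => u k q.1 * v k q.2)]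
    calc (∑' k, ∑' q : ℕ × ℕ, u k q.1 * v k q.2)
        = ∑' k, ∑' k₁, ∑' k₂, u k k₁ * v k k₂ := by
          refine tsum_congr fun k => ?_
          rw [ENNReal.tsum_prod (f := fun (k₁ k₂ : ℕ) => u k k₁ * v k k₂)]
      _ = ∑' k, ∑' k₁, u k k₁ * ∑' k₂, v k k₂ := by
          refine tsum_congr fun k => tsum_congr fun k₁ => ENNReal.tsum_mul_left
      _ ≤ ∑' k, ∑' k₁, u k k₁ * (41 * en γ) := by
          refine ENNReal.tsum_le_tsum fun k => ENNReal.tsum_le_tsum fun k₁ =>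
            mul_le_mul_right (hvbound k) _
      _ = (∑' q : ℕ × ℕ, u q.1 q.2) * (41 * en γ) := by
          rw [ENNReal.tsum_prod (f := fun (k k₁ : ℕ) => u k k₁)]
          rw [← ENNReal.tsum_mul_right]
          refine tsum_congr fun k => ENNReal.tsum_mul_right
      _ ≤ 22 * (en α * en β) * (41 * en γ) := mul_le_mul_left hu2 _
  have hQ : (∑' p : ℕ × ℕ × ℕ, u p.1 p.2.1 * w p.2.2) ≤
      22 * (en α * en β) * (en γ * ENNReal.ofReal T10) := by
    rw [ENNReal.tsum_prod (f := fun (k : ℕ) (q : ℕ × ℕ) => u k q.1 * w q.2)]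
    calc (∑' k, ∑' q : ℕ × ℕ, u k q.1 * w q.2)
        = ∑' k, ∑' k₁, ∑' k₂, u k k₁ * w k₂ := by
          refine tsum_congr fun k => ?_
          rw [ENNReal.tsum_prod (f := fun (k₁ k₂ : ℕ) => u k k₁ * w k₂)]
      _ = ∑' k, ∑' k₁, u k k₁ * ∑' k₂, w k₂ := by
          refine tsum_congr fun k => tsum_congr fun k₁ => ENNReal.tsum_mul_left
      _ ≤ ∑' k, ∑' k₁, u k k₁ * (en γ * ENNReal.ofReal T10) := by
          refine ENNReal.tsum_le_tsum fun k => ENNReal.tsum_le_tsum fun k₁ =>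
            mul_le_mul_right hwbound _
      _ = (∑' q : ℕ × ℕ, u q.1 q.2) * (en γ * ENNReal.ofReal T10) := by
          rw [ENNReal.tsum_prod (f := fun (k k₁ : ℕ) => u k k₁)]
          rw [← ENNReal.tsum_mul_right]
          refine tsum_congr fun k => ENNReal.tsum_mul_right
      _ ≤ 22 * (en α * en β) * (en γ * ENNReal.ofReal T10) := mul_le_mul_left hu2 _
  calc (∑' p : ℕ × ℕ × ℕ, u p.1 p.2.1 * v p.1 p.2.2) +
        (∑' p : ℕ × ℕ × ℕ, u p.1 p.2.1 * w p.2.2)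
      ≤ 22 * (en α * en β) * (41 * en γ) +
        22 * (en α * en β) * (en γ * ENNReal.ofReal T10) := add_le_add hP hQ
    _ = 22 * (41 + ENNReal.ofReal T10) * (en α * en β * en γ) := by ring

/-- Version of `L0` with real sequences and the integer-absolute-value condition. -/
lemma LA (a b c : ℕ → ℝ) (ha : ∀ n, 0 ≤ a n) (hb : ∀ n, 0 ≤ b n) (hc : ∀ n, 0 ≤ c n) :
    ∑' p : ℕ × ℕ × ℕ,
      (if nearMax p.1 p.2.1 p.2.2 ∧ |(p.1 : ℤ) - (p.2.1 : ℤ)| ≤ 10 then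
        ENNReal.ofReal (a p.1 * b p.2.1 * c p.2.2 /
          ((min p.1 (min p.2.1 p.2.2) : ℝ) + 1) ^ 10)
      else 0) ≤
    22 * (41 + ENNReal.ofReal T10) *
      (en (fun n => ENNReal.ofReal (a n)) * en (fun n => ENNReal.ofReal (b n)) *
       en (fun n => ENNReal.ofReal (c n))) := by
  refine le_trans (le_of_eq (tsum_congr ?_))
    (L0 (fun n => ENNReal.ofReal (a n)) (fun n => ENNReal.ofReal (b n))
      (fun n => ENNReal.ofReal (c n)))
  rintro ⟨k, k₁, k₂⟩
  dsimp only
  have hiff : ((|(k : ℤ) - (k₁ : ℤ)| ≤ 10)) ↔ (k ≤ k₁ + 10 ∧ k₁ ≤ k + 10) := by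
    rw [abs_le]; omega
  have h0 : (0:ℝ) ≤ min (k:ℝ) (min (k₁:ℝ) (k₂:ℝ)) :=
    le_min (Nat.cast_nonneg _) (le_min (Nat.cast_nonneg _) (Nat.cast_nonneg _))
  have hval : ENNReal.ofReal (a k * b k₁ * c k₂ /
        ((min (k:ℝ) (min (k₁:ℝ) (k₂:ℝ))) + 1) ^ 10) =
      ENNReal.ofReal (a k) * ENNReal.ofReal (b k₁) * ENNReal.ofReal (c k₂) *
        ENNReal.ofReal (1 / ((min (k:ℝ) (min (k₁:ℝ) (k₂:ℝ))) + 1) ^ 10) := by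
    rw [div_eq_mul_one_div]
    rw [ENNReal.ofReal_mul (mul_nonneg (mul_nonneg (ha k) (hb k₁)) (hc k₂))]
    rw [ENNReal.ofReal_mul (mul_nonneg (ha k) (hb k₁))]
    rw [ENNReal.ofReal_mul (ha k)]
  by_cases h : nearMax k k₁ k₂ ∧ |(k : ℤ) - (k₁ : ℤ)| ≤ 10
  · rw [if_pos h, if_pos ⟨h.1, hiff.mp h.2⟩, hval]
  · rw [if_neg h, if_neg (fun hco => h ⟨hco.1, hiff.mpr hco.2⟩)]

lemma nearMax_swap23 (k k₁ k₂ : ℕ) : nearMax k k₂ k₁ ↔ nearMax k k₁ k₂ := by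
  unfold nearMax; omega

/-- The equivalence swapping the last two coordinates. -/
def eSwap : (ℕ × ℕ × ℕ) ≃ (ℕ × ℕ × ℕ) :=
  ⟨fun p => (p.1, p.2.2, p.2.1), fun p => (p.1, p.2.2, p.2.1),
    fun ⟨_, _, _⟩ => rfl, fun ⟨_, _, _⟩ => rfl⟩

/-- A cyclic rotation of the three coordinates. -/
def eRot : (ℕ × ℕ × ℕ) ≃ (ℕ × ℕ × ℕ) :=
  ⟨fun p => (p.2.2, p.1, p.2.1), fun p => (p.2.1, p.2.2, p.1),
    fun ⟨_, _, _⟩ => rfl, fun ⟨_, _, _⟩ => rfl⟩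

lemma nearMax_rot (k k₁ k₂ : ℕ) : nearMax k₂ k k₁ ↔ nearMax k k₁ k₂ := by
  unfold nearMax; omega

theorem stmt19 (r r₀ : ℝ) (hr : 1 / 2 ≤ r) (hr₀ : 1 ≤ r₀) :
    propertyG (Gwt2 r r₀) := by
  refine ⟨(2 + 2 ^ ((20:ℝ) * r)) * (22 * (41 + T10)), ?_⟩
  intro a b c ha hb hc sa sb sc
  set α : ℕ → ℝ≥0∞ := fun n => ENNReal.ofReal (a n) with hα
  set β : ℕ → ℝ≥0∞ := fun n => ENNReal.ofReal (b n) with hβ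
  set γ : ℕ → ℝ≥0∞ := fun n => ENNReal.ofReal (c n) with hγ
  set K : ℝ≥0∞ := ENNReal.ofReal ((2:ℝ) ^ ((20:ℝ) * r)) with hK
  set d : ℕ × ℕ × ℕ → ℝ := fun p => ((min (p.1:ℝ) (min (p.2.1:ℝ) (p.2.2:ℝ))) + 1) ^ 10 with hd
  set t1 : ℕ × ℕ × ℕ → ℝ≥0∞ := fun p =>
    if nearMax p.1 p.2.1 p.2.2 ∧ |(p.1 : ℤ) - (p.2.1 : ℤ)| ≤ 10 then
      ENNReal.ofReal (a p.1 * b p.2.1 * c p.2.2 / d p) else 0 with ht1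
  set t2 : ℕ × ℕ × ℕ → ℝ≥0∞ := fun p =>
    if nearMax p.1 p.2.1 p.2.2 ∧ |(p.1 : ℤ) - (p.2.2 : ℤ)| ≤ 10 then
      ENNReal.ofReal (a p.1 * b p.2.1 * c p.2.2 / d p) else 0 with ht2
  set t3 : ℕ × ℕ × ℕ → ℝ≥0∞ := fun p =>
    if nearMax p.1 p.2.1 p.2.2 ∧ |(p.2.1 : ℤ) - (p.2.2 : ℤ)| ≤ 10 then
      ENNReal.ofReal (a p.1 * b p.2.1 * c p.2.2 / d p) else 0 with ht3
  -- pointwise bound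
  have hpt : ∀ p : ℕ × ℕ × ℕ,
      (if nearMax p.1 p.2.1 p.2.2 then
        ENNReal.ofReal (Gwt2 r r₀ p.1 p.2.1 p.2.2 * a p.1 * b p.2.1 * c p.2.2 / d p)
      else 0) ≤ (t1 p + K * t2 p) + t3 p := by
    rintro ⟨k, k₁, k₂⟩
    by_cases hnm : nearMax k k₁ k₂
    · rw [if_pos hnm]
      set g1 : ℝ := if |(k : ℤ) - (k₁ : ℤ)| ≤ 10 then
          (2 : ℝ) ^ ((1 / 2 - r) * (k₂ : ℝ)) * (2 : ℝ) ^ ((1 - r₀) * (k₁ : ℝ)) else 0 with hg1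
      set g2 : ℝ := if |(k : ℤ) - (k₂ : ℤ)| ≤ 10 then
          (2 : ℝ) ^ ((r - r₀) * (k₁ : ℝ)) * (2 : ℝ) ^ ((1 - 2 * r) * (k : ℝ)) else 0 with hg2
      set g3 : ℝ := if |(k₁ : ℤ) - (k₂ : ℤ)| ≤ 10 then
          (2 : ℝ) ^ ((1 / 2 - r) * (k : ℝ)) * (2 : ℝ) ^ ((1 - r₀) * (k₁ : ℝ)) else 0 with hg3
      have hg1n : 0 ≤ g1 := by rw [hg1]; split <;> positivity
      have hg2n : 0 ≤ g2 := by rw [hg2]; split <;> positivity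
      have hg3n : 0 ≤ g3 := by rw [hg3]; split <;> positivity
      have hx : (0:ℝ) ≤ a k * b k₁ * c k₂ / d ⟨k, k₁, k₂⟩ := by
        have h0 : (0:ℝ) ≤ min (k:ℝ) (min (k₁:ℝ) (k₂:ℝ)) :=
          le_min (Nat.cast_nonneg _) (le_min (Nat.cast_nonneg _) (Nat.cast_nonneg _))
        have hdp : (0:ℝ) < d ⟨k, k₁, k₂⟩ := by
          rw [hd]; dsimp only; positivity
        exact div_nonneg (mul_nonneg (mul_nonneg (ha k) (hb k₁)) (hc k₂)) hdp.le
      have hsplit : Gwt2 r r₀ k k₁ k₂ * a k * b k₁ * c k₂ / d ⟨k, k₁, k₂⟩ =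
          g1 * (a k * b k₁ * c k₂ / d ⟨k, k₁, k₂⟩) +
          g2 * (a k * b k₁ * c k₂ / d ⟨k, k₁, k₂⟩) +
          g3 * (a k * b k₁ * c k₂ / d ⟨k, k₁, k₂⟩) := by
        rw [Gwt2, hg1, hg2, hg3]; ring
      rw [hsplit, ENNReal.ofReal_add (by positivity) (by positivity),
        ENNReal.ofReal_add (by positivity) (by positivity)]
      refine add_le_add (add_le_add ?_ ?_) ?_
      · -- g1 piece ≤ t1
        rw [ht1]; dsimp only
        by_cases hc1 : |(k : ℤ) - (k₁ : ℤ)| ≤ 10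
        · rw [if_pos ⟨hnm, hc1⟩]
          refine ENNReal.ofReal_le_ofReal ?_
          rw [hg1, if_pos hc1]
          have hb1 : (2 : ℝ) ^ ((1 / 2 - r) * (k₂ : ℝ)) * (2 : ℝ) ^ ((1 - r₀) * (k₁ : ℝ)) ≤ 1 := by
            have e1 : (2 : ℝ) ^ ((1 / 2 - r) * (k₂ : ℝ)) ≤ 1 :=
              Real.rpow_le_one_of_one_le_of_nonpos one_le_two
                (mul_nonpos_of_nonpos_of_nonneg (by linarith) (Nat.cast_nonneg _))
            have e2 : (2 : ℝ) ^ ((1 - r₀) * (k₁ : ℝ)) ≤ 1 :=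
              Real.rpow_le_one_of_one_le_of_nonpos one_le_two
                (mul_nonpos_of_nonpos_of_nonneg (by linarith) (Nat.cast_nonneg _))
            calc (2 : ℝ) ^ ((1 / 2 - r) * (k₂ : ℝ)) * (2 : ℝ) ^ ((1 - r₀) * (k₁ : ℝ))
                ≤ 1 * 1 := by
                  refine mul_le_mul e1 e2 (by positivity) (by norm_num)
              _ = 1 := by norm_num
          nlinarith [hx]
        · rw [hg1, if_neg hc1, zero_mul, ENNReal.ofReal_zero]
          exact zero_le
      · -- g2 piece ≤ K * t2
        rw [ht2]; dsimp only
        by_cases hc2 : |(k : ℤ) - (k₂ : ℤ)| ≤ 10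
        · rw [if_pos ⟨hnm, hc2⟩, hK]
          rw [← ENNReal.ofReal_mul (by positivity)]
          refine ENNReal.ofReal_le_ofReal ?_
          rw [hg2, if_pos hc2]
          have hk1 : (k₁ : ℝ) ≤ (k : ℝ) + 20 := by
            have : k₁ ≤ k + 20 := by
              rw [abs_le] at hc2
              unfold nearMax at hnm
              omega
            exact_mod_cast Nat.cast_le.mpr this |>.trans_eq (by push_cast; ring)
          have hexp : (r - r₀) * (k₁ : ℝ) + (1 - 2 * r) * (k : ℝ) ≤ 20 * r := by
            nlinarith [Nat.cast_nonneg (α := ℝ) k, Nat.cast_nonneg (α := ℝ) k₁,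
              mul_nonneg (sub_nonneg.mpr hr₀) (Nat.cast_nonneg (α := ℝ) k₁)]
          have hb2 : (2 : ℝ) ^ ((r - r₀) * (k₁ : ℝ)) * (2 : ℝ) ^ ((1 - 2 * r) * (k : ℝ)) ≤
              (2:ℝ) ^ ((20:ℝ) * r) := by
            rw [← Real.rpow_add two_pos]
            refine Real.rpow_le_rpow_of_exponent_le one_le_two ?_
            linarith
          nlinarith [hx, Real.rpow_nonneg (le_of_lt two_pos) ((r - r₀) * (k₁ : ℝ)),
            Real.rpow_nonneg (le_of_lt two_pos) ((1 - 2 * r) * (k : ℝ))]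
        · rw [hg2, if_neg hc2, zero_mul, ENNReal.ofReal_zero]
          exact zero_le
      · -- g3 piece ≤ t3
        rw [ht3]; dsimp only
        by_cases hc3 : |(k₁ : ℤ) - (k₂ : ℤ)| ≤ 10
        · rw [if_pos ⟨hnm, hc3⟩]
          refine ENNReal.ofReal_le_ofReal ?_
          rw [hg3, if_pos hc3]
          have hb3 : (2 : ℝ) ^ ((1 / 2 - r) * (k : ℝ)) * (2 : ℝ) ^ ((1 - r₀) * (k₁ : ℝ)) ≤ 1 := by
            have e1 : (2 : ℝ) ^ ((1 / 2 - r) * (k : ℝ)) ≤ 1 :=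
              Real.rpow_le_one_of_one_le_of_nonpos one_le_two
                (mul_nonpos_of_nonpos_of_nonneg (by linarith) (Nat.cast_nonneg _))
            have e2 : (2 : ℝ) ^ ((1 - r₀) * (k₁ : ℝ)) ≤ 1 :=
              Real.rpow_le_one_of_one_le_of_nonpos one_le_two
                (mul_nonpos_of_nonpos_of_nonneg (by linarith) (Nat.cast_nonneg _))
            calc (2 : ℝ) ^ ((1 / 2 - r) * (k : ℝ)) * (2 : ℝ) ^ ((1 - r₀) * (k₁ : ℝ))
                ≤ 1 * 1 := by
                  refine mul_le_mul e1 e2 (by positivity) (by norm_num)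
              _ = 1 := by norm_num
          nlinarith [hx]
        · rw [hg3, if_neg hc3, zero_mul, ENNReal.ofReal_zero]
          exact zero_le
    · rw [if_neg hnm]
      exact zero_le
  refine le_trans (ENNReal.tsum_le_tsum hpt) ?_
  rw [ENNReal.tsum_add, ENNReal.tsum_add, ENNReal.tsum_mul_left]
  set E : ℝ≥0∞ := 22 * (41 + ENNReal.ofReal T10) * (en α * en β * en γ) with hE
  have h1 : (∑' p : ℕ × ℕ × ℕ, t1 p) ≤ E := by
    refine le_trans (le_of_eq ?_) (LA a b c ha hb hc)
    simp only [ht1, hd, hα, hβ, hγ]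
  have h2 : (∑' p : ℕ × ℕ × ℕ, t2 p) ≤ E := by
    have hre : (∑' p : ℕ × ℕ × ℕ, t2 p) = ∑' p : ℕ × ℕ × ℕ, t2 (eSwap p) :=
      (eSwap.tsum_eq t2).symm
    rw [hre]
    have hcongr : ∀ p : ℕ × ℕ × ℕ, t2 (eSwap p) =
        (if nearMax p.1 p.2.1 p.2.2 ∧ |(p.1 : ℤ) - (p.2.1 : ℤ)| ≤ 10 then
          ENNReal.ofReal (a p.1 * c p.2.1 * b p.2.2 /
            ((min (p.1:ℝ) (min (p.2.1:ℝ) (p.2.2:ℝ))) + 1) ^ 10)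
        else 0) := by
      rintro ⟨x, y, z⟩
      show (if nearMax x z y ∧ |(x : ℤ) - (y : ℤ)| ≤ 10 then
          ENNReal.ofReal (a x * b z * c y / d (x, z, y)) else 0) = _
      simp only [hd]
      refine if_congr (and_congr (nearMax_swap23 x y z) Iff.rfl) ?_ rfl
      congr 1
      rw [min_comm ((z:ℕ):ℝ) ((y:ℕ):ℝ)]
      ring
    rw [tsum_congr hcongr]
    refine le_trans (LA a c b ha hc hb) (le_of_eq ?_)
    rw [hE, hα, hβ, hγ]
    ring
  have h3 : (∑' p : ℕ × ℕ × ℕ, t3 p) ≤ E := by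
    have hre : (∑' p : ℕ × ℕ × ℕ, t3 p) = ∑' p : ℕ × ℕ × ℕ, t3 (eRot p) :=
      (eRot.tsum_eq t3).symm
    rw [hre]
    have hcongr : ∀ p : ℕ × ℕ × ℕ, t3 (eRot p) =
        (if nearMax p.1 p.2.1 p.2.2 ∧ |(p.1 : ℤ) - (p.2.1 : ℤ)| ≤ 10 then
          ENNReal.ofReal (b p.1 * c p.2.1 * a p.2.2 /
            ((min (p.1:ℝ) (min (p.2.1:ℝ) (p.2.2:ℝ))) + 1) ^ 10)
        else 0) := by
      rintro ⟨x, y, z⟩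
      show (if nearMax z x y ∧ |(x : ℤ) - (y : ℤ)| ≤ 10 then
          ENNReal.ofReal (a z * b x * c y / d (z, x, y)) else 0) = _
      simp only [hd]
      refine if_congr (and_congr (nearMax_rot x y z) Iff.rfl) ?_ rfl
      congr 1
      rw [min_comm ((z:ℕ):ℝ) (min ((x:ℕ):ℝ) ((y:ℕ):ℝ)), min_assoc]
      ring
    rw [tsum_congr hcongr]
    refine le_trans (LA b c a hb hc ha) (le_of_eq ?_)
    rw [hE, hα, hβ, hγ]
    ring
  calc (∑' p : ℕ × ℕ × ℕ, t1 p) + K * (∑' p : ℕ × ℕ × ℕ, t2 p) +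
        (∑' p : ℕ × ℕ × ℕ, t3 p)
      ≤ E + K * E + E := add_le_add (add_le_add h1 (mul_le_mul_right h2 K)) h3
    _ = (2 + K) * E := by ring
    _ = ENNReal.ofReal ((2 + 2 ^ ((20:ℝ) * r)) * (22 * (41 + T10)) *
          Real.sqrt (∑' n, (a n) ^ 2) * Real.sqrt (∑' n, (b n) ^ 2) *
          Real.sqrt (∑' n, (c n) ^ 2)) := by
        rw [hE, hα, hβ, hγ, en_ofReal a ha sa, en_ofReal b hb sb, en_ofReal c hc sc, hK]
        rw [← ENNReal.ofReal_ofNat 2, ← ENNReal.ofReal_add (by norm_num)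
          (Real.rpow_nonneg (by norm_num) _)]
        rw [show ((22 : ℝ≥0∞) * (41 + ENNReal.ofReal T10)) =
          ENNReal.ofReal (22 * (41 + T10)) by
            rw [ENNReal.ofReal_mul (by norm_num), ENNReal.ofReal_add (by norm_num) T10_nonneg]
            norm_num]
        rw [← ENNReal.ofReal_mul (Real.sqrt_nonneg _), ← ENNReal.ofReal_mul
          (mul_nonneg (Real.sqrt_nonneg _) (Real.sqrt_nonneg _))]
        rw [← ENNReal.ofReal_mul (by nlinarith [T10_nonneg] : (0:ℝ) ≤ 22 * (41 + T10)),
          ← ENNReal.ofReal_mul (by positivity : (0:ℝ) ≤ 2 + (2:ℝ) ^ ((20:ℝ) * r))]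
        congr 1
        ring
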